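/- Let α, β, γ be linear maps on real sequences. The upper triangular matrix operator T(ω,x) = (αω + βx, γx) is bounded on Z₂ if and only if the following three conditions hold: (i) α and γ restrict to bounded operators on ℓ²; (ii) β − KP∘γ is bounded from ℓ_f to ℓ², i.e., there is a constant C with ‖βx − KP(γx)‖₂ ≤ C(‖KP x‖₂ + ‖x‖₂), and βx − KP(γx) ∈ ℓ², for every x ∈ ℓ² with KP x ∈ ℓ²; (iii) the map (ω,x) ↦ αω + βx − KP(γx) is bounded from Z₂ to ℓ², i.e., there is a constant C with αω + βx − KP(γx) ∈ ℓ² and ‖αω + βx − KP(γx)‖₂ ≤ C‖(ω,x)‖_{Z₂} for every (ω,x) ∈ Z₂. -/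
import Mathlib


open scoped BigOperators

noncomputable section

/-- Real sequences. -/
abbrev RSeq : Type := ℕ → ℝ

/-- Membership in ℓ². -/
def memL2 (x : RSeq) : Prop := Summable (fun n => (x n) ^ 2)

/-- The ℓ² norm. -/
noncomputable def l2norm (x : RSeq) : ℝ := Real.sqrt (∑' n, (x n) ^ 2)

/-- The Kalton–Peck map, defined coordinatewise.  (In Lean, `Real.log 0 = 0` and
division by zero is zero, so the conventions `0·log 0 = 0` and `KP 0 = 0` hold.) -/
noncomputable def KP (x : RSeq) : RSeq := fun n => 2 * x n * Real.log (|x n| / l2norm x)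

/-- Membership in the Kalton–Peck space Z₂. -/
def memZ2 (u : RSeq × RSeq) : Prop := memL2 u.2 ∧ memL2 (u.1 - KP u.2)

/-- The Z₂ quasinorm. -/
noncomputable def Z2norm (u : RSeq × RSeq) : ℝ := l2norm (u.1 - KP u.2) + l2norm u.2

/-- A map on pairs of sequences is bounded on Z₂. -/
def BoundedOnZ2 (T : RSeq × RSeq → RSeq × RSeq) : Prop :=
  (∀ u, memZ2 u → memZ2 (T u)) ∧ ∃ C : ℝ, ∀ u, memZ2 u → Z2norm (T u) ≤ C * Z2norm u

/-- The matrix operator associated to four linear maps on sequences. -/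
def matOp (α β δ γ : RSeq →ₗ[ℝ] RSeq) : RSeq × RSeq → RSeq × RSeq :=
  fun u => (α u.1 + β u.2, δ u.1 + γ u.2)

/-- Membership in the Orlicz space ℓ_f = Dom KP. -/
def memLf (x : RSeq) : Prop := memL2 x ∧ memL2 (KP x)

/-- The ℓ_f quasinorm. -/
noncomputable def lfNorm (x : RSeq) : ℝ := l2norm (KP x) + l2norm x

/-- Membership in ℓ_f* = Ran KP. -/
def memLfStar (ω : RSeq) : Prop := ∃ x : RSeq, memL2 x ∧ memL2 (ω - KP x)

/-- The ℓ_f* quasinorm. -/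
noncomputable def lfStarNorm (ω : RSeq) : ℝ :=
  sInf {r : ℝ | ∃ x : RSeq, memL2 x ∧ memL2 (ω - KP x) ∧ r = l2norm (ω - KP x) + l2norm x}

/-- A bounded map on Z₂ is strictly singular if every linear subspace of Z₂ on which it is
bounded below is finite dimensional. -/
def StrictlySingular (T : RSeq × RSeq → RSeq × RSeq) : Prop :=
  ∀ V : Submodule ℝ (RSeq × RSeq), (∀ v ∈ V, memZ2 v) →
    (∃ c > 0, ∀ v ∈ V, c * Z2norm v ≤ Z2norm (T v)) → FiniteDimensional ℝ V

/-- A set of sequences is totally bounded (relatively compact) for the ℓ² norm. -/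
def l2TotallyBounded (A : Set RSeq) : Prop :=
  ∀ ε > 0, ∃ S : Set RSeq, S.Finite ∧
    ∀ a ∈ A, ∃ s ∈ S, memL2 (a - s) ∧ l2norm (a - s) < ε

/-- A map on Z₂ is compact if the image of the unit ball is totally bounded for the
Z₂ quasinorm. -/
def CompactOnZ2 (T : RSeq × RSeq → RSeq × RSeq) : Prop :=
  ∀ ε > 0, ∃ S : Set (RSeq × RSeq), S.Finite ∧
    ∀ u, memZ2 u → Z2norm u ≤ 1 → ∃ s ∈ S, memZ2 (T u - s) ∧ Z2norm (T u - s) < ε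


lemma l2norm_nonneg (x : RSeq) : 0 ≤ l2norm x := Real.sqrt_nonneg _

lemma memL2_zero : memL2 (0 : RSeq) := by
  simpa [memL2] using summable_zero

lemma l2norm_zero : l2norm (0 : RSeq) = 0 := by
  simp [l2norm, tsum_zero]

lemma KP_zero : KP (0 : RSeq) = 0 := by
  funext n; simp [KP]

lemma memL2_neg {x : RSeq} (h : memL2 x) : memL2 (-x) := by
  simpa [memL2, neg_sq] using h

lemma l2norm_neg (x : RSeq) : l2norm (-x) = l2norm x := by
  simp [l2norm, neg_sq]

/-- The upper triangular operator T(ω,x) = (αω + βx, γx) is bounded on Z₂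
if and only if α and γ restrict to bounded operators on ℓ², β − KP∘γ is bounded from
ℓ_f to ℓ², and (ω,x) ↦ αω + βx − KP(γx) is bounded from Z₂ to ℓ². -/
theorem stmt_11 (α β γ : RSeq →ₗ[ℝ] RSeq) :
    BoundedOnZ2 (fun u : RSeq × RSeq => (α u.1 + β u.2, γ u.2)) ↔
      ((∃ C : ℝ, ∀ y : RSeq, memL2 y → memL2 (α y) ∧ l2norm (α y) ≤ C * l2norm y) ∧
       (∃ C : ℝ, ∀ y : RSeq, memL2 y → memL2 (γ y) ∧ l2norm (γ y) ≤ C * l2norm y)) ∧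
      (∃ C : ℝ, ∀ x : RSeq, memL2 x → memL2 (KP x) →
        memL2 (β x - KP (γ x)) ∧
        l2norm (β x - KP (γ x)) ≤ C * (l2norm (KP x) + l2norm x)) ∧
      (∃ C : ℝ, ∀ u : RSeq × RSeq, memZ2 u →
        memL2 (α u.1 + β u.2 - KP (γ u.2)) ∧
        l2norm (α u.1 + β u.2 - KP (γ u.2)) ≤ C * Z2norm u) := by
  constructor
  · rintro ⟨hmem, C, hC⟩
    have hiii : ∀ u : RSeq × RSeq, memZ2 u →
        memL2 (α u.1 + β u.2 - KP (γ u.2)) ∧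
        l2norm (α u.1 + β u.2 - KP (γ u.2)) ≤ C * Z2norm u := by
      intro u hu
      have h1 := hmem u hu
      have h2 := hC u hu
      refine ⟨h1.2, ?_⟩
      calc l2norm (α u.1 + β u.2 - KP (γ u.2))
          ≤ Z2norm (α u.1 + β u.2, γ u.2) :=
            le_add_of_nonneg_right (l2norm_nonneg _)
        _ ≤ C * Z2norm u := h2
    refine ⟨⟨⟨C, ?_⟩, ⟨C, ?_⟩⟩, ⟨C, ?_⟩, ⟨C, hiii⟩⟩
    · -- α bounded on ℓ²
      intro y hy
      have huz : memZ2 (y, (0 : RSeq)) := by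
        refine ⟨memL2_zero, ?_⟩
        simpa [KP_zero, sub_zero] using hy
      have h1 := (hmem (y, (0 : RSeq)) huz).2
      have h2 := hC (y, (0 : RSeq)) huz
      simp only [map_zero, add_zero, KP_zero, sub_zero] at h1
      refine ⟨h1, ?_⟩
      have hZu : Z2norm (y, (0 : RSeq)) = l2norm y := by
        simp [Z2norm, KP_zero, sub_zero, l2norm_zero]
      have hZT : l2norm (α y) ≤ Z2norm (α y + β 0, γ (0 : RSeq)) := by
        have : Z2norm (α y + β 0, γ (0 : RSeq)) =
            l2norm (α y) + l2norm (γ (0 : RSeq)) := by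
          simp [Z2norm, map_zero, KP_zero, sub_zero]
        rw [this]
        exact le_add_of_nonneg_right (l2norm_nonneg _)
      calc l2norm (α y) ≤ Z2norm (α y + β 0, γ (0 : RSeq)) := hZT
        _ ≤ C * Z2norm (y, (0 : RSeq)) := h2
        _ = C * l2norm y := by rw [hZu]
    · -- γ bounded on ℓ²
      intro y hy
      have huz : memZ2 (KP y, y) := by
        refine ⟨hy, ?_⟩
        simpa [sub_self] using memL2_zero
      have h1 := (hmem (KP y, y) huz).1
      have h2 := hC (KP y, y) huz
      refine ⟨h1, ?_⟩
      have hZu : Z2norm (KP y, y) = l2norm y := by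
        simp [Z2norm, sub_self, l2norm_zero]
      have hZT : l2norm (γ y) ≤ Z2norm (α (KP y) + β y, γ y) :=
        le_add_of_nonneg_left (l2norm_nonneg _)
      calc l2norm (γ y) ≤ Z2norm (α (KP y) + β y, γ y) := hZT
        _ ≤ C * Z2norm (KP y, y) := h2
        _ = C * l2norm y := by rw [hZu]
    · -- β − KP∘γ bounded from ℓ_f
      intro x hx hKP
      have huz : memZ2 ((0 : RSeq), x) := by
        refine ⟨hx, ?_⟩
        simpa [zero_sub] using memL2_neg hKP
      have h := hiii ((0 : RSeq), x) huz
      simp only [map_zero, zero_add] at h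
      refine ⟨h.1, ?_⟩
      have hZu : Z2norm ((0 : RSeq), x) = l2norm (KP x) + l2norm x := by
        simp [Z2norm, zero_sub, l2norm_neg]
      calc l2norm (β x - KP (γ x)) ≤ C * Z2norm ((0 : RSeq), x) := h.2
        _ = C * (l2norm (KP x) + l2norm x) := by rw [hZu]
  · rintro ⟨⟨-, ⟨Cγ, hγ⟩⟩, -, ⟨C3, h3⟩⟩
    constructor
    · intro u hu
      exact ⟨(hγ u.2 hu.1).1, (h3 u hu).1⟩
    · refine ⟨C3 + max Cγ 0, ?_⟩
      intro u hu
      have h1 := (h3 u hu).2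
      have h2 := (hγ u.2 hu.1).2
      have hx_le : l2norm u.2 ≤ Z2norm u := le_add_of_nonneg_left (l2norm_nonneg _)
      have hγ' : l2norm (γ u.2) ≤ max Cγ 0 * Z2norm u := by
        calc l2norm (γ u.2) ≤ Cγ * l2norm u.2 := h2
          _ ≤ max Cγ 0 * l2norm u.2 :=
            mul_le_mul_of_nonneg_right (le_max_left _ _) (l2norm_nonneg _)
          _ ≤ max Cγ 0 * Z2norm u :=
            mul_le_mul_of_nonneg_left hx_le (le_max_right _ _)
      have : Z2norm (α u.1 + β u.2, γ u.2) =
          l2norm (α u.1 + β u.2 - KP (γ u.2)) + l2norm (γ u.2) := rfl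
      rw [this, add_mul]
      exact add_le_add h1 hγ'
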